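/- Suppose Ψ : [0,∞) → [0,∞) is concave, increasing, Ψ(0)=0, Ψ(δ) > 0, and define ᾱ := δ²/Ψ(δ). Suppose ¼‖Tu_α − Tu†‖² ≤ δ² + α·Ψ(‖Tu_α − Tu†‖) holds, that α ≤ ᾱ, and that (τ̲−1)δ ≤ ‖Tu_α − Tu†‖ ≤ (τ̄+1)δ for radii 1 < τ̲ ≤ τ̄ < ∞. Then ¼‖Tu_α − Tu†‖ ≤ ((τ̄+2)/(τ̲−1))·δ. -/

import Mathlib

/-- Lemma: with `ᾱ = δ²/Ψ(δ)` and `α ≤ ᾱ`,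
`¼‖Tu_α - Tu†‖ ≤ ((τ̄+2)/(τ̲-1))·δ`. -/
theorem stmt_15 {N M : ℕ}
    (T : EuclideanSpace ℝ (Fin N) →L[ℝ] EuclideanSpace ℝ (Fin M))
    (uα udag : EuclideanSpace ℝ (Fin N))
    (α δ τlo τhi : ℝ) (Ψ : ℝ → ℝ)
    (hα : 0 < α) (hδ : 0 < δ)
    (hτlo : 1 < τlo) (hττ : τlo ≤ τhi)
    (hΨconc : ConcaveOn ℝ (Set.Ici (0 : ℝ)) Ψ)
    (hΨmono : MonotoneOn Ψ (Set.Ici (0 : ℝ)))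
    (hΨ0 : Ψ 0 = 0) (hΨδ : 0 < Ψ δ)
    (hαbar : α ≤ δ ^ 2 / Ψ δ)
    (hkey : (1 / 4) * ‖T uα - T udag‖ ^ 2 ≤
      δ ^ 2 + α * Ψ ‖T uα - T udag‖)
    (hdisc_lo : (τlo - 1) * δ ≤ ‖T uα - T udag‖)
    (hdisc_hi : ‖T uα - T udag‖ ≤ (τhi + 1) * δ) :
    (1 / 4) * ‖T uα - T udag‖ ≤ ((τhi + 2) / (τlo - 1)) * δ := by
  set r := ‖T uα - T udag‖ with hr
  have hr0 : 0 ≤ r := norm_nonneg _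
  have hK0 : 0 < τhi + 1 := by linarith
  have hmem0 : (0:ℝ) ∈ Set.Ici (0:ℝ) := Set.mem_Ici.mpr le_rfl
  have hmemK : (τhi + 1) * δ ∈ Set.Ici (0:ℝ) :=
    Set.mem_Ici.mpr (le_of_lt (mul_pos hK0 hδ))
  have ha : (0:ℝ) ≤ 1 - 1/(τhi + 1) := by
    have : 1/(τhi + 1) ≤ 1 := by
      rw [div_le_one hK0]; linarith
    linarith
  have hb : (0:ℝ) ≤ 1/(τhi + 1) := by positivity
  have hab : (1 - 1/(τhi + 1)) + 1/(τhi + 1) = 1 := by ring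
  have hconc := hΨconc.2 hmem0 hmemK ha hb hab
  have heq : (1 - 1/(τhi + 1)) • (0:ℝ) + (1/(τhi + 1)) • ((τhi + 1) * δ) = δ := by
    rw [smul_eq_mul, smul_eq_mul]; field_simp; ring
  rw [heq] at hconc
  have h2 : (1/(τhi + 1)) * Ψ ((τhi + 1) * δ) ≤ Ψ δ := by
    simpa [hΨ0, smul_eq_mul] using hconc
  have hΨK : Ψ ((τhi + 1) * δ) ≤ (τhi + 1) * Ψ δ := by
    have h3 := mul_le_mul_of_nonneg_left h2 (le_of_lt hK0)
    calc Ψ ((τhi + 1) * δ) = (τhi + 1) * ((1/(τhi + 1)) * Ψ ((τhi + 1) * δ)) := by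
          field_simp
      _ ≤ (τhi + 1) * Ψ δ := h3
  have hΨr : Ψ r ≤ Ψ ((τhi + 1) * δ) := hΨmono hr0 hmemK hdisc_hi
  have hαΨ : α * Ψ r ≤ (τhi + 1) * δ ^ 2 := by
    calc α * Ψ r ≤ α * ((τhi + 1) * Ψ δ) := by
          apply mul_le_mul_of_nonneg_left _ (le_of_lt hα); linarith
      _ ≤ (δ ^ 2 / Ψ δ) * ((τhi + 1) * Ψ δ) := by
          apply mul_le_mul_of_nonneg_right hαbar; positivity
      _ = (τhi + 1) * δ ^ 2 := by field_simp
  have hmain : (1/4) * r ^ 2 ≤ (τhi + 2) * δ ^ 2 := by nlinarith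
  have hlo : 0 < τlo - 1 := by linarith
  have hgoal : (1/4) * r * (τlo - 1) ≤ (τhi + 2) * δ := by
    nlinarith [mul_le_mul_of_nonneg_left hdisc_lo
      (by positivity : (0:ℝ) ≤ (1/4) * r)]
  calc (1/4) * r = ((1/4) * r * (τlo - 1)) / (τlo - 1) := by field_simp
    _ ≤ ((τhi + 2) * δ) / (τlo - 1) := by gcongr
    _ = ((τhi + 2) / (τlo - 1)) * δ := by ring
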